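/- arXiv:1803.07039 — 3 statements merged into one kernel-verified Lean document; each statement's English description precedes it below -/
import Mathlib

section
/- Let d ≥ 1, let S be the swap operator on ℂ^d ⊗ ℂ^d, and let ρ, σ be density matrices on ℂ^d. For every real θ, tr₂( exp(−iθS)·(σ ⊗ ρ)·exp(iθS) ) = cos²(θ)·σ + sin²(θ)·ρ − i·cos(θ)sin(θ)·(ρσ − σρ). -/
open Matrix Kronecker
open scoped ComplexOrder

/-- The swap operator `S` on `ℂ^d ⊗ ℂ^d`, with entries
`S_{(i,j),(k,l)} = δ_{il} δ_{jk}`. -/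
def swapOp (d : ℕ) : Matrix (Fin d × Fin d) (Fin d × Fin d) ℂ :=
  Matrix.of fun p q => if p.1 = q.2 ∧ p.2 = q.1 then 1 else 0

/-- The partial trace over the second tensor factor:
`(tr₂ X)_{ik} = Σ_j X_{(i,j),(k,j)}`. -/
noncomputable def ptraceRight {α : Type*} [Fintype α] {d : ℕ}
    (X : Matrix (α × Fin d) (α × Fin d) ℂ) : Matrix α α ℂ :=
  Matrix.of fun i k => ∑ j, X (i, j) (k, j)

/-- A density matrix: positive semidefinite with unit trace. -/
def IsDensityMatrix {n : Type*} [Fintype n] (ρ : Matrix n n ℂ) : Prop :=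
  ρ.PosSemidef ∧ ρ.trace = 1

lemma exp_smul_of_sq_eq_one {A : Type*} [NormedRing A] [NormedAlgebra ℂ A] [CompleteSpace A]
    (S : A) (hS : S * S = 1) (z : ℂ) :
    NormedSpace.exp (z • S) = Complex.cosh z • (1 : A) + Complex.sinh z • S := by
  set f : ℕ → A := fun n => (z ^ n / (n.factorial : ℂ)) • S ^ n with hf
  have hpow : ∀ n : ℕ, (((n.factorial : ℂ))⁻¹) • (z • S) ^ n = f n := by
    intro n
    rw [hf, smul_pow, smul_smul]
    congr 1
    rw [div_eq_mul_inv, mul_comm]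
  have heven : ∀ k : ℕ, S ^ (2 * k) = 1 := fun k => by
    rw [pow_mul, show S ^ 2 = 1 by rw [sq, hS], one_pow]
  have hodd : ∀ k : ℕ, S ^ (2 * k + 1) = S := fun k => by
    rw [pow_succ, heven, one_mul]
  have h1 : HasSum (fun k : ℕ => f (2 * k)) (Complex.cosh z • (1 : A)) := by
    simp only [hf, heven]
    exact (Complex.hasSum_cosh z).smul_const 1
  have h2 : HasSum (fun k : ℕ => f (2 * k + 1)) (Complex.sinh z • S) := by
    simp only [hf, hodd]
    exact (Complex.hasSum_sinh z).smul_const S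
  have h3 : HasSum f (Complex.cosh z • (1 : A) + Complex.sinh z • S) :=
    HasSum.even_add_odd h1 h2
  have hmain : HasSum (fun n : ℕ => (((n.factorial : ℂ))⁻¹) • (z • S) ^ n)
      (Complex.cosh z • (1 : A) + Complex.sinh z • S) := by
    simpa only [hpow] using h3
  exact (NormedSpace.exp_series_hasSum_exp' (z • S)).unique hmain

lemma swapOp_mul_apply {d : ℕ} (X : Matrix (Fin d × Fin d) (Fin d × Fin d) ℂ)
    (p q : Fin d × Fin d) : (swapOp d * X) p q = X (p.2, p.1) q := by
  rw [Matrix.mul_apply, Finset.sum_eq_single ((p.2, p.1) : Fin d × Fin d)]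
  · simp [swapOp]
  · rintro ⟨a, b⟩ _ hb
    simp only [swapOp, Matrix.of_apply, ite_mul, one_mul, zero_mul]
    split
    · rename_i h
      exact absurd (by simp [Prod.ext_iff, h.1.symm, h.2.symm]) hb
    · rfl
  · simp

lemma mul_swapOp_apply {d : ℕ} (X : Matrix (Fin d × Fin d) (Fin d × Fin d) ℂ)
    (p q : Fin d × Fin d) : (X * swapOp d) p q = X p (q.2, q.1) := by
  rw [Matrix.mul_apply, Finset.sum_eq_single ((q.2, q.1) : Fin d × Fin d)]
  · simp [swapOp]
  · rintro ⟨a, b⟩ _ hb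
    simp only [swapOp, Matrix.of_apply, mul_ite, mul_one, mul_zero]
    split
    · rename_i h
      exact absurd (by simp [Prod.ext_iff, h.1, h.2]) hb
    · rfl
  · simp

lemma swapOp_mul_self (d : ℕ) : swapOp d * swapOp d = 1 := by
  ext p q
  rw [swapOp_mul_apply]
  simp [swapOp, Matrix.one_apply, Prod.ext_iff, and_comm, eq_comm]

lemma exp_smul_swapOp (d : ℕ) (z : ℂ) :
    NormedSpace.exp (z • swapOp d) =
      Complex.cosh z • (1 : Matrix (Fin d × Fin d) (Fin d × Fin d) ℂ) +
        Complex.sinh z • swapOp d := by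
  letI : SeminormedRing (Matrix (Fin d × Fin d) (Fin d × Fin d) ℂ) :=
    Matrix.linftyOpSemiNormedRing
  letI : NormedRing (Matrix (Fin d × Fin d) (Fin d × Fin d) ℂ) := Matrix.linftyOpNormedRing
  letI : NormedAlgebra ℂ (Matrix (Fin d × Fin d) (Fin d × Fin d) ℂ) :=
    Matrix.linftyOpNormedAlgebra
  exact exp_smul_of_sq_eq_one _ (swapOp_mul_self d) z

lemma ptraceRight_add {α : Type*} [Fintype α] {d : ℕ}
    (X Y : Matrix (α × Fin d) (α × Fin d) ℂ) :
    ptraceRight (X + Y) = ptraceRight X + ptraceRight Y := by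
  ext i k
  simp [ptraceRight, Finset.sum_add_distrib]

lemma ptraceRight_smul {α : Type*} [Fintype α] {d : ℕ} (c : ℂ)
    (X : Matrix (α × Fin d) (α × Fin d) ℂ) :
    ptraceRight (c • X) = c • ptraceRight X := by
  ext i k
  simp [ptraceRight, Finset.mul_sum]

lemma ptraceRight_kron {d : ℕ} (σ ρ : Matrix (Fin d) (Fin d) ℂ) :
    ptraceRight (σ ⊗ₖ ρ) = ρ.trace • σ := by
  ext i k
  simp only [ptraceRight, Matrix.of_apply, Matrix.kroneckerMap_apply, Matrix.smul_apply,
    Matrix.trace, Matrix.diag, smul_eq_mul, ← Finset.mul_sum]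
  ring

lemma ptraceRight_swap_mul_kron {d : ℕ} (σ ρ : Matrix (Fin d) (Fin d) ℂ) :
    ptraceRight (swapOp d * (σ ⊗ₖ ρ)) = ρ * σ := by
  ext i k
  simp only [ptraceRight, Matrix.of_apply, swapOp_mul_apply, Matrix.kroneckerMap_apply]
  rw [Matrix.mul_apply]
  exact Finset.sum_congr rfl fun j _ => mul_comm _ _

lemma ptraceRight_kron_mul_swap {d : ℕ} (σ ρ : Matrix (Fin d) (Fin d) ℂ) :
    ptraceRight ((σ ⊗ₖ ρ) * swapOp d) = σ * ρ := by
  ext i k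
  simp only [ptraceRight, Matrix.of_apply, mul_swapOp_apply, Matrix.kroneckerMap_apply]
  rw [Matrix.mul_apply]

lemma ptraceRight_swap_kron_swap {d : ℕ} (σ ρ : Matrix (Fin d) (Fin d) ℂ) :
    ptraceRight (swapOp d * (σ ⊗ₖ ρ) * swapOp d) = σ.trace • ρ := by
  ext i k
  simp [ptraceRight, mul_swapOp_apply, swapOp_mul_apply, Matrix.trace, Matrix.diag,
    Finset.sum_mul]

/-- `tr₂(exp(−iθS)(σ ⊗ₖ ρ)exp(iθS)) = cos²θ·σ + sin²θ·ρ − i cosθ sinθ (ρσ − σρ)`. -/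
theorem ptraceRight_partialSwap_conj (d : ℕ) (hd : 1 ≤ d)
    (ρ σ : Matrix (Fin d) (Fin d) ℂ)
    (hρ : IsDensityMatrix ρ) (hσ : IsDensityMatrix σ) (θ : ℝ) :
    ptraceRight
        (NormedSpace.exp ((-(Complex.I * (θ : ℂ))) • swapOp d) * (σ ⊗ₖ ρ) *
          NormedSpace.exp ((Complex.I * (θ : ℂ)) • swapOp d)) =
      ((Real.cos θ : ℂ) ^ 2) • σ + ((Real.sin θ : ℂ) ^ 2) • ρ -
        (Complex.I * (Real.cos θ : ℂ) * (Real.sin θ : ℂ)) • (ρ * σ - σ * ρ) := by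
  obtain ⟨-, hρt⟩ := hρ
  obtain ⟨-, hσt⟩ := hσ
  have e1 : Complex.cosh (-(Complex.I * (θ : ℂ))) = (Real.cos θ : ℂ) := by
    rw [Complex.cosh_neg, mul_comm, Complex.cosh_mul_I, Complex.ofReal_cos]
  have e2 : Complex.sinh (-(Complex.I * (θ : ℂ))) = -((Real.sin θ : ℂ) * Complex.I) := by
    rw [Complex.sinh_neg, mul_comm, Complex.sinh_mul_I, Complex.ofReal_sin]
  have e3 : Complex.cosh (Complex.I * (θ : ℂ)) = (Real.cos θ : ℂ) := by
    rw [mul_comm, Complex.cosh_mul_I, Complex.ofReal_cos]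
  have e4 : Complex.sinh (Complex.I * (θ : ℂ)) = (Real.sin θ : ℂ) * Complex.I := by
    rw [mul_comm, Complex.sinh_mul_I, Complex.ofReal_sin]
  rw [exp_smul_swapOp, exp_smul_swapOp, e1, e2, e3, e4]
  set c : ℂ := (Real.cos θ : ℂ)
  set s : ℂ := (Real.sin θ : ℂ)
  set X := σ ⊗ₖ ρ with hX
  have hexpand :
      (c • (1 : Matrix (Fin d × Fin d) (Fin d × Fin d) ℂ) + (-(s * Complex.I)) • swapOp d) * X *
          (c • 1 + (s * Complex.I) • swapOp d) =
        (c * c) • X + (c * (s * Complex.I)) • (X * swapOp d) +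
          ((-(s * Complex.I)) * c) • (swapOp d * X) +
          ((-(s * Complex.I)) * (s * Complex.I)) • (swapOp d * X * swapOp d) := by
    simp only [add_mul, mul_add, smul_mul_assoc, mul_smul_comm, one_mul, mul_one, smul_add,
      smul_smul]
    module
  rw [hexpand, ptraceRight_add, ptraceRight_add, ptraceRight_add, ptraceRight_smul,
    ptraceRight_smul, ptraceRight_smul, ptraceRight_smul, hX, ptraceRight_kron,
    ptraceRight_kron_mul_swap, ptraceRight_swap_mul_kron, ptraceRight_swap_kron_swap,
    hρt, hσt, one_smul, one_smul]
  have hc2 : (-(s * Complex.I)) * (s * Complex.I) = s ^ 2 := by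
    have := Complex.I_sq
    ring_nf
    rw [Complex.I_sq]
    ring
  rw [hc2]
  ext i k
  simp only [Matrix.add_apply, Matrix.sub_apply, Matrix.smul_apply, smul_eq_mul]
  ring
end

section
/- Let H₁, …, H_K be Hermitian D×D complex matrices, let Λ = Σ_{k=1}^{K} ‖H_k‖ (operator norms), and let n ≥ 1 be an integer. Then ‖ ( exp(−iH₁/n)·exp(−iH₂/n)·⋯·exp(−iH_K/n) )^n − exp( −i(H₁ + ⋯ + H_K) ) ‖ ≤ (Λ² / n)·e^{Λ/n}. -/
open NormedSpace

lemma lt_aux_mono {a b : ℝ} (ha : 0 ≤ a) (hab : a ≤ b) :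
    Real.exp a - 1 - a ≤ Real.exp b - 1 - b := by
  have h1 := Real.add_one_le_exp (b - a)
  have h2 : Real.exp a * Real.exp (b - a) = Real.exp b := by
    rw [← Real.exp_add]; ring_nf
  have h3 : 1 ≤ Real.exp a := Real.one_le_exp ha
  nlinarith

lemma lt_aux_quad {s : ℝ} (hs : 0 ≤ s) :
    Real.exp s - 1 - s ≤ s ^ 2 / 2 * Real.exp s := by
  have key : ∀ t ∈ Set.Icc (0:ℝ) s, Real.exp t - 1 ≤ t * Real.exp s := by
    intro t ht
    obtain ⟨ht0, hts⟩ := ht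
    have h1 := Real.add_one_le_exp (-t)
    have h2 : Real.exp (-t) * Real.exp t = 1 := by
      rw [← Real.exp_add]; simp
    have h3 : Real.exp t ≤ Real.exp s := Real.exp_le_exp.mpr hts
    nlinarith [Real.exp_pos t]
  have hint : (∫ t in (0:ℝ)..s, (Real.exp t - 1)) = Real.exp s - 1 - s := by
    rw [intervalIntegral.integral_sub (Continuous.intervalIntegrable Real.continuous_exp _ _)
      (intervalIntegrable_const)]
    simp [integral_exp]
  have hint2 : (∫ t in (0:ℝ)..s, t * Real.exp s) = s ^ 2 / 2 * Real.exp s := by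
    rw [intervalIntegral.integral_mul_const, integral_id]
    ring
  have h := intervalIntegral.integral_mono_on hs
    ((Real.continuous_exp.sub continuous_const).intervalIntegrable _ _)
    ((continuous_id.mul continuous_const).intervalIntegrable (μ := MeasureTheory.volume) _ _) key
  simp only [Pi.sub_apply, Pi.mul_apply, id] at h
  rw [hint, hint2] at h
  exact h



section Alg
variable {𝔸 : Type*} [NormedRing 𝔸] [NormedAlgebra ℂ 𝔸] [CompleteSpace 𝔸] [NormOneClass 𝔸]

lemma lt_term_le (x : 𝔸) (k : ℕ) : ‖((Nat.factorial k : ℂ))⁻¹ • x ^ k‖ ≤ ‖x‖ ^ k / (Nat.factorial k : ℝ) := by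
  rw [norm_smul]
  have h1 : ‖((Nat.factorial k : ℂ))⁻¹‖ = ((Nat.factorial k : ℝ))⁻¹ := by
    rw [norm_inv]
    simp
  rw [h1, div_eq_inv_mul]
  exact mul_le_mul_of_nonneg_left (norm_pow_le x k) (by positivity)

lemma lt_norm_exp_le (x : 𝔸) : ‖exp x‖ ≤ Real.exp ‖x‖ := by
  rw [exp_eq_tsum ℂ]
  refine (norm_tsum_le_tsum_norm (norm_expSeries_summable' x)).trans ?_
  have h : Real.exp ‖x‖ = ∑' k : ℕ, ‖x‖ ^ k / (Nat.factorial k : ℝ) := by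
    rw [Real.exp_eq_exp_ℝ, exp_eq_tsum_div]
  rw [h]
  exact Summable.tsum_le_tsum (fun k => lt_term_le x k) (norm_expSeries_summable' x)
    (Real.summable_pow_div_factorial ‖x‖)

set_option maxHeartbeats 1000000 in
lemma lt_exp_remainder (x : 𝔸) : ‖exp x - 1 - x‖ ≤ Real.exp ‖x‖ - 1 - ‖x‖ := by
  have hs := expSeries_summable' (𝕂 := ℂ) x
  have key : exp x - 1 - x = ∑' k : ℕ, ((Nat.factorial (k + 2) : ℂ))⁻¹ • x ^ (k + 2) := by
    have h2 := Summable.sum_add_tsum_nat_add 2 hs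
    rw [exp_eq_tsum ℂ]
    beta_reduce
    rw [← h2, Finset.sum_range_succ, Finset.sum_range_one]
    simp only [Nat.factorial_zero, Nat.factorial_one, pow_zero, pow_one, Nat.cast_one, inv_one,
      one_smul]
    abel
  have hsr := Real.summable_pow_div_factorial ‖x‖
  have keyr : Real.exp ‖x‖ - 1 - ‖x‖ = ∑' k : ℕ, ‖x‖ ^ (k + 2) / (Nat.factorial (k + 2) : ℝ) := by
    have h2 := Summable.sum_add_tsum_nat_add 2 hsr
    rw [Real.exp_eq_exp_ℝ, exp_eq_tsum_div]
    beta_reduce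
    rw [← h2, Finset.sum_range_succ, Finset.sum_range_one]
    simp only [Nat.factorial_zero, Nat.factorial_one, pow_zero, pow_one, Nat.cast_one, div_one]
    ring
  rw [key, keyr]
  have hA : Summable (fun k : ℕ => ‖((Nat.factorial (k + 2) : ℂ))⁻¹ • x ^ (k + 2)‖) :=
    (summable_nat_add_iff 2).mpr (norm_expSeries_summable' x)
  have hB : Summable (fun k : ℕ => ‖x‖ ^ (k + 2) / (Nat.factorial (k + 2) : ℝ)) :=
    (summable_nat_add_iff 2).mpr hsr
  exact (norm_tsum_le_tsum_norm hA).trans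
    (Summable.tsum_le_tsum (fun k => lt_term_le x (k + 2)) hA hB)

lemma lt_list_norm_sum_le (L : List 𝔸) : ‖L.sum‖ ≤ (L.map norm).sum := by
  induction L with
  | nil => simp
  | cons x L ih =>
    simp only [List.sum_cons, List.map_cons]
    exact (norm_add_le _ _).trans (by gcongr)

lemma lt_prod_norm_le (L : List 𝔸) : ‖(L.map exp).prod‖ ≤ Real.exp (L.map norm).sum := by
  induction L with
  | nil => simp
  | cons x L ih =>
    simp only [List.map_cons, List.prod_cons, List.sum_cons, Real.exp_add]
    exact (norm_mul_le _ _).trans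
      (mul_le_mul (lt_norm_exp_le x) ih (norm_nonneg _) (Real.exp_pos _).le)

lemma lt_remainder_nonneg {s : ℝ} (hs : 0 ≤ s) : 0 ≤ Real.exp s - 1 - s := by
  have := Real.add_one_le_exp s
  linarith

lemma lt_prod_remainder (L : List 𝔸) :
    ‖(L.map exp).prod - 1 - L.sum‖ ≤
      Real.exp (L.map norm).sum - 1 - (L.map norm).sum := by
  induction L with
  | nil => simp
  | cons x L ih =>
    simp only [List.map_cons, List.prod_cons, List.sum_cons]
    set P := (L.map exp).prod with hP
    set S := L.sum with hS
    set σ := (L.map norm).sum with hσdef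
    have hσ0 : 0 ≤ σ := by
      rw [hσdef]
      exact List.sum_nonneg (by simp)
    have hSn : ‖S‖ ≤ σ := lt_list_norm_sum_le L
    have hPn : ‖P‖ ≤ Real.exp σ := lt_prod_norm_le L
    have hkey : exp x * P - 1 - (x + S) =
        (exp x - 1 - x) * P + ((1 + x) * (P - 1 - S) + x * S) := by
      noncomm_ring
    rw [hkey]
    have h1 : ‖(exp x - 1 - x) * P‖ ≤ (Real.exp ‖x‖ - 1 - ‖x‖) * Real.exp σ :=
      (norm_mul_le _ _).trans
        (mul_le_mul (lt_exp_remainder x) hPn (norm_nonneg _)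
          (lt_remainder_nonneg (norm_nonneg x)))
    have h2 : ‖(1 + x) * (P - 1 - S)‖ ≤ (1 + ‖x‖) * (Real.exp σ - 1 - σ) := by
      refine (norm_mul_le _ _).trans (mul_le_mul ?_ ih (norm_nonneg _) (by positivity))
      exact (norm_add_le _ _).trans (by simp)
    have h3 : ‖x * S‖ ≤ ‖x‖ * σ :=
      (norm_mul_le _ _).trans (mul_le_mul_of_nonneg_left hSn (norm_nonneg _))
    have hfin : (Real.exp ‖x‖ - 1 - ‖x‖) * Real.exp σ +
        ((1 + ‖x‖) * (Real.exp σ - 1 - σ) + ‖x‖ * σ) =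
        Real.exp (‖x‖ + σ) - 1 - (‖x‖ + σ) := by
      rw [Real.exp_add]; ring
    calc ‖(exp x - 1 - x) * P + ((1 + x) * (P - 1 - S) + x * S)‖
        ≤ ‖(exp x - 1 - x) * P‖ + (‖(1 + x) * (P - 1 - S)‖ + ‖x * S‖) :=
          (norm_add_le _ _).trans (by gcongr; exact norm_add_le _ _)
      _ ≤ (Real.exp ‖x‖ - 1 - ‖x‖) * Real.exp σ +
            ((1 + ‖x‖) * (Real.exp σ - 1 - σ) + ‖x‖ * σ) := by
          gcongr
      _ = Real.exp (‖x‖ + σ) - 1 - (‖x‖ + σ) := hfin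

lemma lt_pow_sub_pow (A B : 𝔸) (hA : ‖A‖ ≤ 1) (hB : ‖B‖ ≤ 1) (m : ℕ) :
    ‖A ^ m - B ^ m‖ ≤ m * ‖A - B‖ := by
  induction m with
  | zero => simp
  | succ m ih =>
    have hkey : A ^ (m + 1) - B ^ (m + 1) = A ^ m * (A - B) + (A ^ m - B ^ m) * B := by
      noncomm_ring
    rw [hkey]
    have hAm : ‖A ^ m‖ ≤ 1 :=
      (norm_pow_le A m).trans (pow_le_one₀ (norm_nonneg _) hA)
    have h1 : ‖A ^ m * (A - B)‖ ≤ ‖A - B‖ :=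
      (norm_mul_le _ _).trans (by nlinarith [norm_nonneg (A - B)])
    have h2 : ‖(A ^ m - B ^ m) * B‖ ≤ m * ‖A - B‖ :=
      (norm_mul_le _ _).trans (by nlinarith [norm_nonneg (A ^ m - B ^ m), norm_nonneg B,
        (by positivity : (0:ℝ) ≤ (m:ℝ)), norm_nonneg (A - B)])
    calc ‖A ^ m * (A - B) + (A ^ m - B ^ m) * B‖ ≤ ‖A ^ m * (A - B)‖ + ‖(A ^ m - B ^ m) * B‖ :=
          norm_add_le _ _
      _ ≤ ‖A - B‖ + m * ‖A - B‖ := add_le_add h1 h2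
      _ = (m + 1 : ℕ) * ‖A - B‖ := by push_cast; ring

end Alg

open Matrix
open scoped Matrix.Norms.L2Operator




/-- Quantitative Lie–Trotter product bound: for Hermitian `H₁, …, H_K` with
`Λ = Σ_k ‖H_k‖` (ℓ²→ℓ² operator norms) and `n ≥ 1`,
`‖(exp(−iH₁/n)⋯exp(−iH_K/n))^n − exp(−i(H₁+⋯+H_K))‖ ≤ (Λ²/n)·e^{Λ/n}`. -/
theorem lie_trotter_bound (D K : ℕ) (H : Fin K → Matrix (Fin D) (Fin D) ℂ)
    (hH : ∀ k, (H k).IsHermitian) (n : ℕ) (hn : 1 ≤ n) :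
    ‖((List.ofFn fun k =>
          NormedSpace.exp ((-(Complex.I / (n : ℂ))) • H k)).prod) ^ n -
        NormedSpace.exp ((-Complex.I) • ∑ k, H k)‖ ≤
      ((∑ k, ‖H k‖) ^ 2 / (n : ℝ)) * Real.exp ((∑ k, ‖H k‖) / (n : ℝ)) := by
  rcases Nat.eq_zero_or_pos D with hD | hD
  · subst hD
    haveI : Subsingleton (Matrix (Fin 0) (Fin 0) ℂ) := by
      constructor; intro a b; ext i j; exact absurd i.2 (by omega)
    rw [Subsingleton.elim (((List.ofFn fun k =>
          NormedSpace.exp ((-(Complex.I / (n : ℂ))) • H k)).prod) ^ n -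
        NormedSpace.exp ((-Complex.I) • ∑ k, H k)) 0, norm_zero]
    positivity
  haveI : Nonempty (Fin D) := ⟨⟨0, hD⟩⟩
  haveI : Nontrivial (Matrix (Fin D) (Fin D) ℂ) :=
    ⟨0, 1, fun h => by simpa using congrFun (congrFun h ⟨0, hD⟩) ⟨0, hD⟩⟩
  have hn0 : (n : ℝ) ≠ 0 := by positivity
  have hnc : (n : ℂ) ≠ 0 := Nat.cast_ne_zero.mpr (by omega)
  set c : ℂ := -(Complex.I / (n : ℂ)) with hc
  set Λ : ℝ := ∑ k, ‖H k‖ with hΛ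
  have hΛ0 : 0 ≤ Λ := Finset.sum_nonneg fun k _ => norm_nonneg _
  have hs0 : 0 ≤ Λ / n := by positivity
  set X : Fin K → Matrix (Fin D) (Fin D) ℂ := fun k => c • H k with hX
  set L : List (Matrix (Fin D) (Fin D) ℂ) := List.ofFn X with hL
  have hmap : (List.ofFn fun k => exp (c • H k)) = L.map exp := by
    rw [hL, List.map_ofFn]; rfl
  have hsum : L.sum = c • ∑ k, H k := by
    rw [hL, List.sum_ofFn, hX, ← Finset.smul_sum]
  have hnormc : ‖c‖ = 1 / n := by
    rw [hc]
    rw [norm_neg, norm_div, Complex.norm_I]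
    simp
  have hnorms : (L.map norm).sum = Λ / n := by
    rw [hL, List.map_ofFn, List.sum_ofFn]
    have hXk : ∀ k, ‖X k‖ = ‖H k‖ / n := by
      intro k
      show ‖c • H k‖ = _
      rw [norm_smul, hnormc]
      ring
    rw [show (norm ∘ X) = fun k => ‖H k‖ / (n : ℝ) from funext hXk, hΛ, Finset.sum_div]
  set A : Matrix (Fin D) (Fin D) ℂ := (L.map exp).prod with hA
  set B : Matrix (Fin D) (Fin D) ℂ := exp (c • ∑ k, H k) with hB
  rw [hmap]
  have hBpow : exp ((-Complex.I) • ∑ k, H k) = B ^ n := by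
    rw [hB, ← Matrix.exp_nsmul]
    congr 1
    rw [← Nat.cast_smul_eq_nsmul ℂ, smul_smul]
    congr 1
    rw [hc]
    field_simp
  rw [hBpow]
  -- skew-adjointness and unitarity
  have hskew : ∀ M : Matrix (Fin D) (Fin D) ℂ, M.IsHermitian →
      c • M ∈ skewAdjoint (Matrix (Fin D) (Fin D) ℂ) := by
    intro M hM
    rw [skewAdjoint.mem_iff, star_smul]
    have h1 : star M = M := hM
    have h2 : star c = -c := by
      rw [hc]
      simp [div_eq_mul_inv]
    rw [h1, h2, neg_smul]
  letI : NormedAlgebra ℚ (Matrix (Fin D) (Fin D) ℂ) := NormedAlgebra.restrictScalars ℚ ℂ _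
  have hAu : A ∈ unitary (Matrix (Fin D) (Fin D) ℂ) := by
    rw [hA]
    apply Submonoid.list_prod_mem
    intro x hx
    rw [hL, List.map_ofFn] at hx
    obtain ⟨k, hk⟩ := List.mem_ofFn.mp hx
    rw [← hk]
    exact exp_mem_unitary_of_mem_skewAdjoint (hskew _ (hH k))
  have hSherm : (∑ k, H k).IsHermitian := by
    unfold Matrix.IsHermitian
    rw [Matrix.conjTranspose_sum]
    exact Finset.sum_congr rfl fun k _ => hH k
  have hBu : B ∈ unitary (Matrix (Fin D) (Fin D) ℂ) :=
    exp_mem_unitary_of_mem_skewAdjoint (hskew _ hSherm)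
  have hAn : ‖A‖ ≤ 1 := le_of_eq (CStarRing.norm_of_mem_unitary hAu)
  have hBn : ‖B‖ ≤ 1 := le_of_eq (CStarRing.norm_of_mem_unitary hBu)
  -- bound on ‖A - B‖
  have hsub : ‖A - B‖ ≤ 2 * (Real.exp (Λ / n) - 1 - Λ / n) := by
    have e1 : A - B = (A - 1 - L.sum) - (B - 1 - L.sum) := by abel
    have h1 : ‖A - 1 - L.sum‖ ≤ Real.exp (Λ / n) - 1 - Λ / n := by
      have := lt_prod_remainder L
      rwa [hnorms] at this
    have h2 : ‖B - 1 - L.sum‖ ≤ Real.exp (Λ / n) - 1 - Λ / n := by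
      have hBe : B = exp L.sum := by rw [hB, hsum]
      have := lt_exp_remainder L.sum
      rw [← hBe] at this
      refine this.trans (lt_aux_mono (norm_nonneg _) ?_)
      rw [← hnorms]
      exact lt_list_norm_sum_le L
    calc ‖A - B‖ = ‖(A - 1 - L.sum) - (B - 1 - L.sum)‖ := by rw [← e1]
      _ ≤ ‖A - 1 - L.sum‖ + ‖B - 1 - L.sum‖ := norm_sub_le _ _
      _ ≤ _ := by linarith
  have hpow := lt_pow_sub_pow A B hAn hBn n
  have hquad := lt_aux_quad hs0
  calc ‖A ^ n - B ^ n‖ ≤ n * ‖A - B‖ := hpow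
    _ ≤ n * (2 * (Real.exp (Λ / n) - 1 - Λ / n)) := by
        exact mul_le_mul_of_nonneg_left hsub (by positivity)
    _ ≤ n * (2 * ((Λ / n) ^ 2 / 2 * Real.exp (Λ / n))) := by
        have h3 : Real.exp (Λ / n) - 1 - Λ / n ≤ (Λ / n) ^ 2 / 2 * Real.exp (Λ / n) := hquad
        nlinarith [(Nat.one_le_cast (α := ℝ)).mpr hn]
    _ = Λ ^ 2 / n * Real.exp (Λ / n) := by
        field_simp
end

section
/- Let x⁽¹⁾, …, x⁽ᴹ⁾ be unit vectors in ℂ^d, let ρ = (1/M)·Σ_{m=1}^{M} x⁽ᵐ⁾(x⁽ᵐ⁾)† be their statistical ensemble, let t be real and n ≥ 1 an integer, and for each m define the unitary U_m = P₀ ⊗ I_d + P₁ ⊗ exp( −i·(t/(nM))·x⁽ᵐ⁾(x⁽ᵐ⁾)† ) on ℂ² ⊗ ℂ^d. Then ‖ (U_M·U_{M−1}·⋯·U₁)^n − exp( −i·t·(P₁ ⊗ ρ) ) ‖ ≤ (t²/n)·e^{|t|}. -/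
open Matrix Kronecker
open scoped Matrix.Norms.L2Operator

/-- The projector `|0⟩⟨0| = diag(1,0)` on the control (learning) qubit. -/
def P0 : Matrix (Fin 2) (Fin 2) ℂ := Matrix.diagonal ![1, 0]

/-- The projector `|1⟩⟨1| = diag(0,1)` on the control (learning) qubit. -/
def P1 : Matrix (Fin 2) (Fin 2) ℂ := Matrix.diagonal ![0, 1]

/-- The rank-one projector `x x†` onto a vector `x ∈ ℂ^d`. -/
def outerProj {d : ℕ} (x : Fin d → ℂ) : Matrix (Fin d) (Fin d) ℂ :=
  Matrix.vecMulVec x (star x)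

section ExpBounds

variable {𝕂 𝔸 : Type*} [RCLike 𝕂] [NormedRing 𝔸] [NormedAlgebra 𝕂 𝔸] [CompleteSpace 𝔸]

lemma exp_tail_eq (X : 𝔸) :
    NormedSpace.exp X = 1 + ∑' k : ℕ, (((k + 1).factorial : 𝕂))⁻¹ • X ^ (k + 1) := by
  have hsum := NormedSpace.expSeries_summable' (𝕂 := 𝕂) X
  rw [NormedSpace.exp_eq_tsum 𝕂]
  beta_reduce
  rw [Summable.tsum_eq_zero_add hsum]
  simp

lemma exp_tail2_eq (X : 𝔸) :
    NormedSpace.exp X = 1 + X + ∑' k : ℕ, (((k + 2).factorial : 𝕂))⁻¹ • X ^ (k + 2) := by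
  have hsum := NormedSpace.expSeries_summable' (𝕂 := 𝕂) X
  have hsum1 : Summable fun k : ℕ => (((k + 1).factorial : 𝕂))⁻¹ • X ^ (k + 1) := by
    simpa using (summable_nat_add_iff 1).mpr hsum
  rw [exp_tail_eq (𝕂 := 𝕂) X, Summable.tsum_eq_zero_add hsum1]
  have h2 : (fun k : ℕ => (((k + 1 + 1).factorial : 𝕂))⁻¹ • X ^ (k + 1 + 1)) =
      fun k : ℕ => (((k + 2).factorial : 𝕂))⁻¹ • X ^ (k + 2) := by
    funext k; norm_num
  rw [h2]
  simp [add_assoc]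

lemma real_exp_tail2 (s : ℝ) :
    Real.exp s = 1 + s + ∑' k : ℕ, (((k + 2).factorial : ℝ))⁻¹ * s ^ (k + 2) := by
  rw [Real.exp_eq_exp_ℝ]
  simpa [smul_eq_mul] using exp_tail2_eq (𝕂 := ℝ) s

lemma real_exp_eq_tsum (s : ℝ) :
    Real.exp s = ∑' k : ℕ, ((k.factorial : ℝ))⁻¹ * s ^ k := by
  rw [Real.exp_eq_exp_ℝ, NormedSpace.exp_eq_tsum ℝ]
  simp [smul_eq_mul]

lemma norm_exp_sub_one_sub_le {𝕂 : Type*} [RCLike 𝕂] [NormedAlgebra 𝕂 𝔸] (X : 𝔸) :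
    ‖NormedSpace.exp X - 1 - X‖ ≤ Real.exp ‖X‖ - 1 - ‖X‖ := by
  have h1 : NormedSpace.exp X - 1 - X
      = ∑' k : ℕ, (((k + 2).factorial : 𝕂))⁻¹ • X ^ (k + 2) := by
    rw [exp_tail2_eq (𝕂 := 𝕂) X]; abel
  have h2 : Real.exp ‖X‖ - 1 - ‖X‖ = ∑' k : ℕ, (((k + 2).factorial : ℝ))⁻¹ * ‖X‖ ^ (k + 2) := by
    rw [real_exp_tail2]; ring
  rw [h1, h2]
  have hsumA : Summable fun k : ℕ => ‖(((k + 2).factorial : 𝕂))⁻¹ • X ^ (k + 2)‖ := by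
    simpa using (summable_nat_add_iff 2).mpr (NormedSpace.norm_expSeries_summable' (𝕂 := 𝕂) X)
  have hsumB : Summable fun k : ℕ => (((k + 2).factorial : ℝ))⁻¹ * ‖X‖ ^ (k + 2) := by
    simpa [smul_eq_mul] using
      (summable_nat_add_iff 2).mpr (NormedSpace.expSeries_summable' (𝕂 := ℝ) ‖X‖)
  refine (norm_tsum_le_tsum_norm hsumA).trans (hsumA.tsum_le_tsum ?_ hsumB)
  intro k
  rw [norm_smul, norm_inv, RCLike.norm_natCast]
  exact mul_le_mul_of_nonneg_left (norm_pow_le' X (by positivity)) (by positivity)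

lemma norm_exp_le_exp_norm' {𝕂 : Type*} [RCLike 𝕂] [NormedAlgebra 𝕂 𝔸] (h1 : ‖(1 : 𝔸)‖ ≤ 1) (X : 𝔸) :
    ‖NormedSpace.exp X‖ ≤ Real.exp ‖X‖ := by
  rw [NormedSpace.exp_eq_tsum 𝕂]
  beta_reduce
  rw [real_exp_eq_tsum]
  refine (norm_tsum_le_tsum_norm (NormedSpace.norm_expSeries_summable' (𝕂 := 𝕂) X)).trans
    ((NormedSpace.norm_expSeries_summable' (𝕂 := 𝕂) X).tsum_le_tsum ?_ ?_)
  · intro k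
    rw [norm_smul, norm_inv, RCLike.norm_natCast]
    rcases Nat.eq_zero_or_pos k with hk | hk
    · subst hk; simpa using h1
    · exact mul_le_mul_of_nonneg_left (norm_pow_le' X hk) (by positivity)
  · simpa [smul_eq_mul] using NormedSpace.expSeries_summable' (𝕂 := ℝ) ‖X‖

omit [RCLike 𝕂] [NormedAlgebra 𝕂 𝔸] [CompleteSpace 𝔸] in
lemma list_norm_sum_le : ∀ l : List 𝔸, ‖l.sum‖ ≤ (l.map (‖·‖)).sum
  | [] => by simp
  | a :: l => by
    simp only [List.sum_cons, List.map_cons]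
    exact (norm_add_le _ _).trans (by have := list_norm_sum_le l; gcongr)

omit [RCLike 𝕂] [NormedAlgebra 𝕂 𝔸] [CompleteSpace 𝔸] in
lemma list_map_norm_sum_nonneg (l : List 𝔸) : 0 ≤ (l.map (‖·‖)).sum := by
  induction l with
  | nil => simp
  | cons a l ih => simp only [List.map_cons, List.sum_cons]; positivity

lemma norm_list_prod_exp_le {𝕂 : Type*} [RCLike 𝕂] [NormedAlgebra 𝕂 𝔸] (h1 : ‖(1 : 𝔸)‖ ≤ 1) :
    ∀ l : List 𝔸, ‖(l.map (NormedSpace.exp)).prod‖ ≤ Real.exp ((l.map (‖·‖)).sum)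
  | [] => by simpa using h1.trans (by norm_num)
  | a :: l => by
    simp only [List.map_cons, List.prod_cons, List.sum_cons, Real.exp_add]
    refine (norm_mul_le _ _).trans ?_
    have h2 := norm_list_prod_exp_le (𝕂 := 𝕂) h1 l
    have h3 := norm_exp_le_exp_norm' (𝕂 := 𝕂) h1 a
    exact mul_le_mul h3 h2 (norm_nonneg _) (Real.exp_pos _).le

lemma exp_sub_one_sub_nonneg (u : ℝ) : 0 ≤ Real.exp u - 1 - u := by
  nlinarith [Real.add_one_le_exp u]

lemma norm_list_prod_exp_sub_le {𝕂 : Type*} [RCLike 𝕂] [NormedAlgebra 𝕂 𝔸] (h1 : ‖(1 : 𝔸)‖ ≤ 1) :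
    ∀ l : List 𝔸, ‖(l.map (NormedSpace.exp)).prod - 1 - l.sum‖
      ≤ Real.exp ((l.map (‖·‖)).sum) - 1 - (l.map (‖·‖)).sum
  | [] => by simp
  | a :: l => by
    simp only [List.map_cons, List.prod_cons, List.sum_cons]
    set Q := (l.map (NormedSpace.exp)).prod with hQdef
    set S := l.sum
    set σ := (l.map (‖·‖)).sum with hσdef
    set α := ‖a‖ with hαdef
    have key : NormedSpace.exp a * Q - 1 - (a + S)
        = (NormedSpace.exp a - 1 - a) * Q + (Q - 1 - S) + a * (Q - 1) := by
      noncomm_ring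
    have hQ : ‖Q‖ ≤ Real.exp σ := norm_list_prod_exp_le (𝕂 := 𝕂) h1 l
    have hQ1S : ‖Q - 1 - S‖ ≤ Real.exp σ - 1 - σ := norm_list_prod_exp_sub_le (𝕂 := 𝕂) h1 l
    have hS : ‖S‖ ≤ σ := list_norm_sum_le l
    have hQ1 : ‖Q - 1‖ ≤ Real.exp σ - 1 := by
      have h : Q - 1 = (Q - 1 - S) + S := by abel
      rw [h]
      refine (norm_add_le _ _).trans ?_; linarith
    have hεa : ‖NormedSpace.exp a - 1 - a‖ ≤ Real.exp α - 1 - α :=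
      norm_exp_sub_one_sub_le (𝕂 := 𝕂) a
    have hσ0 : 0 ≤ σ := list_map_norm_sum_nonneg l
    have hα0 : 0 ≤ α := norm_nonneg a
    rw [key, Real.exp_add]
    have hb1 : ‖(NormedSpace.exp a - 1 - a) * Q‖ ≤ (Real.exp α - 1 - α) * Real.exp σ := by
      refine (norm_mul_le _ _).trans ?_
      exact mul_le_mul hεa hQ (norm_nonneg _) (exp_sub_one_sub_nonneg α)
    have hb3 : ‖a * (Q - 1)‖ ≤ α * (Real.exp σ - 1) := by
      refine (norm_mul_le _ _).trans ?_
      exact mul_le_mul le_rfl hQ1 (norm_nonneg _) hα0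
    calc ‖(NormedSpace.exp a - 1 - a) * Q + (Q - 1 - S) + a * (Q - 1)‖
        ≤ ‖(NormedSpace.exp a - 1 - a) * Q + (Q - 1 - S)‖ + ‖a * (Q - 1)‖ := norm_add_le _ _
      _ ≤ ‖(NormedSpace.exp a - 1 - a) * Q‖ + ‖Q - 1 - S‖ + ‖a * (Q - 1)‖ := by
          have := norm_add_le ((NormedSpace.exp a - 1 - a) * Q) (Q - 1 - S); linarith
      _ ≤ (Real.exp α - 1 - α) * Real.exp σ + (Real.exp σ - 1 - σ) + α * (Real.exp σ - 1) := by
          linarith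
      _ = Real.exp α * Real.exp σ - 1 - (α + σ) := by ring

omit [RCLike 𝕂] [NormedAlgebra 𝕂 𝔸] [CompleteSpace 𝔸] in
lemma norm_pow_sub_pow_le (a b : 𝔸) {C : ℝ} (ha : ‖a‖ ≤ C) (hb : ‖b‖ ≤ C) :
    ∀ k : ℕ, ‖a ^ (k + 1) - b ^ (k + 1)‖ ≤ ((k : ℝ) + 1) * C ^ k * ‖a - b‖
  | 0 => by simp
  | (k + 1) => by
    have hC : 0 ≤ C := (norm_nonneg a).trans ha
    have key : a ^ (k + 2) - b ^ (k + 2)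
        = a ^ (k + 1) * (a - b) + (a ^ (k + 1) - b ^ (k + 1)) * b := by
      rw [pow_succ, pow_succ]; noncomm_ring
    have hak : ‖a ^ (k + 1)‖ ≤ C ^ (k + 1) :=
      (norm_pow_le' a (Nat.succ_pos k)).trans (pow_le_pow_left₀ (norm_nonneg a) ha _)
    have ih := norm_pow_sub_pow_le a b ha hb k
    have h1 : ‖a ^ (k + 1) * (a - b)‖ ≤ C ^ (k + 1) * ‖a - b‖ :=
      (norm_mul_le _ _).trans (mul_le_mul_of_nonneg_right hak (norm_nonneg _))
    have h2 : ‖(a ^ (k + 1) - b ^ (k + 1)) * b‖ ≤ (((k : ℝ) + 1) * C ^ k * ‖a - b‖) * C := by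
      refine (norm_mul_le _ _).trans ?_
      exact mul_le_mul ih hb (norm_nonneg _) (by positivity)
    rw [key]
    refine (norm_add_le _ _).trans ?_
    have hCk : ((k : ℝ) + 1) * C ^ k * ‖a - b‖ * C = ((k : ℝ) + 1) * C ^ (k + 1) * ‖a - b‖ := by
      rw [pow_succ]; ring
    rw [hCk] at h2
    have h3 : ((k : ℝ) + 1 + 1) * C ^ (k + 1) * ‖a - b‖
        = C ^ (k + 1) * ‖a - b‖ + ((k : ℝ) + 1) * C ^ (k + 1) * ‖a - b‖ := by ring
    push_cast
    linarith

end ExpBounds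

lemma exp_sub_one_sub_mono {u s : ℝ} (hu : 0 ≤ u) (hus : u ≤ s) :
    Real.exp u - 1 - u ≤ Real.exp s - 1 - s := by
  have h1 : Real.exp (s - u) * Real.exp u = Real.exp s := by
    rw [← Real.exp_add]; ring_nf
  have h2 : 1 ≤ Real.exp u := Real.one_le_exp hu
  have h3 : s - u + 1 ≤ Real.exp (s - u) := by
    have := Real.add_one_le_exp (s - u); linarith
  nlinarith

set_option maxHeartbeats 1000000 in
lemma two_exp_sub_le {s : ℝ} (hs : 0 ≤ s) :
    2 * (Real.exp s - 1 - s) ≤ s ^ 2 * Real.exp s := by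
  have h1 : Real.exp s - 1 - s = ∑' k : ℕ, (((k + 2).factorial : ℝ))⁻¹ * s ^ (k + 2) := by
    rw [real_exp_tail2]; ring
  have hsum : Summable fun k : ℕ => ((k.factorial : ℝ))⁻¹ * s ^ k := by
    simpa [smul_eq_mul] using NormedSpace.expSeries_summable' (𝕂 := ℝ) s
  have hsum2 : Summable fun k : ℕ => (((k + 2).factorial : ℝ))⁻¹ * s ^ (k + 2) :=
    (summable_nat_add_iff 2).mpr hsum
  have hterm : ∀ k : ℕ, (((k + 2).factorial : ℝ))⁻¹ * s ^ (k + 2)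
      ≤ s ^ 2 / 2 * (((k.factorial : ℝ))⁻¹ * s ^ k) := by
    intro k
    have hfacn : 2 * k.factorial ≤ (k + 2).factorial := by
      have he : (k + 2).factorial = (k + 2) * ((k + 1) * k.factorial) := by
        rw [Nat.factorial_succ, Nat.factorial_succ]
      calc 2 * k.factorial = 2 * (1 * k.factorial) := by rw [one_mul]
        _ ≤ (k + 2) * ((k + 1) * k.factorial) :=
            Nat.mul_le_mul (by omega) (Nat.mul_le_mul (by omega) le_rfl)
        _ = (k + 2).factorial := he.symm
    have hfac : (2 : ℝ) * (k.factorial : ℝ) ≤ ((k + 2).factorial : ℝ) := by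
      exact_mod_cast hfacn
    have hpos : (0 : ℝ) < 2 * (k.factorial : ℝ) := by positivity
    have hinv : (((k + 2).factorial : ℝ))⁻¹ ≤ (2 * (k.factorial : ℝ))⁻¹ :=
      inv_anti₀ hpos hfac
    calc (((k + 2).factorial : ℝ))⁻¹ * s ^ (k + 2)
        = (((k + 2).factorial : ℝ))⁻¹ * (s ^ 2 * s ^ k) := by ring
      _ ≤ (2 * (k.factorial : ℝ))⁻¹ * (s ^ 2 * s ^ k) :=
          mul_le_mul_of_nonneg_right hinv (mul_nonneg (sq_nonneg s) (pow_nonneg hs k))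
      _ = s ^ 2 / 2 * (((k.factorial : ℝ))⁻¹ * s ^ k) := by
          rw [mul_inv]; ring
  have key : (∑' k : ℕ, (((k + 2).factorial : ℝ))⁻¹ * s ^ (k + 2)) ≤ s ^ 2 / 2 * Real.exp s := by
    have h := hsum2.tsum_le_tsum hterm (hsum.mul_left (s ^ 2 / 2))
    rw [tsum_mul_left] at h
    rw [real_exp_eq_tsum]
    exact h
  rw [h1]
  linarith [key]

section MatrixLemmas

variable {d : ℕ}

lemma P0_add_P1 : P0 + P1 = 1 := by
  ext i j
  fin_cases i <;> fin_cases j <;>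
    simp [P0, P1, Matrix.one_apply, Matrix.diagonal]

lemma P1_mul_P1 : P1 * P1 = P1 := by
  have h : (fun i => ![(0 : ℂ), 1] i * ![0, 1] i) = ![0, 1] := by
    funext i; fin_cases i <;> norm_num
  rw [P1, Matrix.diagonal_mul_diagonal, h]

lemma P1_conjTranspose : P1ᴴ = P1 := by
  ext i j
  fin_cases i <;> fin_cases j <;>
    simp [P1, Matrix.conjTranspose_apply, Matrix.diagonal]

lemma outerProj_conjTranspose (x : Fin d → ℂ) : (outerProj x)ᴴ = outerProj x := by
  ext i j
  simp [outerProj, Matrix.conjTranspose_apply, Matrix.vecMulVec_apply, mul_comm]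

lemma outerProj_mul_self (x : Fin d → ℂ) (hx : ∑ i, ‖x i‖ ^ 2 = 1) :
    outerProj x * outerProj x = outerProj x := by
  have hsum : ∑ k, (starRingEnd ℂ) (x k) * x k = 1 := by
    have h : ∀ k, (starRingEnd ℂ) (x k) * x k = ((‖x k‖ ^ 2 : ℝ) : ℂ) := by
      intro k
      rw [mul_comm, Complex.mul_conj']
      push_cast
      ring
    rw [Finset.sum_congr rfl fun k _ => h k, ← Complex.ofReal_sum, hx]
    norm_num
  ext i j
  simp only [outerProj, Matrix.mul_apply, Matrix.vecMulVec_apply, Pi.star_apply]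
  calc ∑ k, x i * star (x k) * (x k * star (x j))
      = (x i * star (x j)) * ∑ k, (starRingEnd ℂ) (x k) * x k := by
        rw [Finset.mul_sum]
        refine Finset.sum_congr rfl fun k _ => ?_
        simp only [RCLike.star_def]
        ring
    _ = x i * star (x j) := by rw [hsum, mul_one]

lemma kron_conjTranspose (A : Matrix (Fin 2) (Fin 2) ℂ) (B : Matrix (Fin d) (Fin d) ℂ) :
    (A ⊗ₖ B)ᴴ = Aᴴ ⊗ₖ Bᴴ := by
  ext ⟨i, j⟩ ⟨i', j'⟩
  simp [Matrix.conjTranspose_apply, Matrix.kroneckerMap_apply, mul_comm]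

lemma norm_le_one_of_proj {N : Matrix (Fin 2 × Fin d) (Fin 2 × Fin d) ℂ}
    (hherm : Nᴴ = N) (hidem : N * N = N) : ‖N‖ ≤ 1 := by
  have h := Matrix.l2_opNorm_conjTranspose_mul_self N
  rw [hherm, hidem] at h
  nlinarith [norm_nonneg N]

/-- The linear map `B ↦ P1 ⊗ₖ B`. -/
noncomputable def kronP1L (d : ℕ) :
    Matrix (Fin d) (Fin d) ℂ →ₗ[ℂ] Matrix (Fin 2 × Fin d) (Fin 2 × Fin d) ℂ where
  toFun B := P1 ⊗ₖ B
  map_add' B C := Matrix.kronecker_add _ _ _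
  map_smul' c B := Matrix.kronecker_smul _ _ _

lemma exp_P1_kron (B : Matrix (Fin d) (Fin d) ℂ) :
    NormedSpace.exp (P1 ⊗ₖ B) = P0 ⊗ₖ (1 : Matrix (Fin d) (Fin d) ℂ)
      + P1 ⊗ₖ NormedSpace.exp B := by
  have hpow : ∀ k : ℕ, (P1 ⊗ₖ B) ^ (k + 1) = P1 ⊗ₖ (B ^ (k + 1)) := by
    intro k
    induction k with
    | zero => simp
    | succ k ih =>
      rw [pow_succ, ih, ← Matrix.mul_kronecker_mul, P1_mul_P1, ← pow_succ]
  have hsB : Summable fun k : ℕ => (((k + 1).factorial : ℂ))⁻¹ • B ^ (k + 1) := by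
    simpa using (summable_nat_add_iff 1).mpr (NormedSpace.expSeries_summable' (𝕂 := ℂ) B)
  let L : Matrix (Fin d) (Fin d) ℂ →L[ℂ] Matrix (Fin 2 × Fin d) (Fin 2 × Fin d) ℂ :=
    LinearMap.toContinuousLinearMap (kronP1L d)
  have hLapp : ∀ C, L C = P1 ⊗ₖ C := fun C => rfl
  have htail : ∑' k : ℕ, (((k + 1).factorial : ℂ))⁻¹ • (P1 ⊗ₖ B) ^ (k + 1)
      = P1 ⊗ₖ (NormedSpace.exp B - 1) := by
    have step1 : ∀ k : ℕ, (((k + 1).factorial : ℂ))⁻¹ • (P1 ⊗ₖ B) ^ (k + 1)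
        = L ((((k + 1).factorial : ℂ))⁻¹ • B ^ (k + 1)) := by
      intro k
      rw [_root_.map_smul, hLapp, hpow]
    have step2 : ∑' k : ℕ, (((k + 1).factorial : ℂ))⁻¹ • B ^ (k + 1)
        = NormedSpace.exp B - 1 := by
      rw [exp_tail_eq (𝕂 := ℂ) B]; abel
    rw [tsum_congr step1, ← L.map_tsum hsB, step2, hLapp]
  have hsub : P1 ⊗ₖ (NormedSpace.exp B - 1)
      = P1 ⊗ₖ NormedSpace.exp B - P1 ⊗ₖ (1 : Matrix (Fin d) (Fin d) ℂ) := by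
    exact map_sub (kronP1L d) (NormedSpace.exp B) 1
  have hone : (1 : Matrix (Fin 2 × Fin d) (Fin 2 × Fin d) ℂ)
      = P0 ⊗ₖ (1 : Matrix (Fin d) (Fin d) ℂ) + P1 ⊗ₖ (1 : Matrix (Fin d) (Fin d) ℂ) := by
    rw [← Matrix.add_kronecker, P0_add_P1, Matrix.one_kronecker_one]
  rw [exp_tail_eq (𝕂 := ℂ) (P1 ⊗ₖ B), htail, hsub]
  nth_rewrite 1 [hone]
  abel

lemma norm_one_matrix_le : ‖(1 : Matrix (Fin 2 × Fin d) (Fin 2 × Fin d) ℂ)‖ ≤ 1 := by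
  calc ‖(1 : Matrix (Fin 2 × Fin d) (Fin 2 × Fin d) ℂ)‖
      = ‖toEuclideanCLM (𝕜 := ℂ) (1 : Matrix (Fin 2 × Fin d) (Fin 2 × Fin d) ℂ)‖ :=
        Matrix.cstar_norm_def _
    _ = ‖(1 : EuclideanSpace ℂ (Fin 2 × Fin d) →L[ℂ] EuclideanSpace ℂ (Fin 2 × Fin d))‖ := by
        rw [_root_.map_one]
    _ ≤ 1 := by rw [ContinuousLinearMap.one_def]; exact ContinuousLinearMap.norm_id_le

end MatrixLemmas

/-- bcQSE unitary approximation: for unit vectors `x⁽¹⁾, …, x⁽ᴹ⁾` with ensemble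
`ρ = (1/M) Σ_m x⁽ᵐ⁾(x⁽ᵐ⁾)†` and controlled batch unitaries
`U_m = P₀ ⊗ I + P₁ ⊗ exp(−i(t/(nM)) x⁽ᵐ⁾(x⁽ᵐ⁾)†)`, one has
`‖(U_M⋯U₁)^n − exp(−it(P₁ ⊗ ρ))‖ ≤ (t²/n)·e^{|t|}`. -/
theorem bcQSE_unitary_approx (d M : ℕ) (hM : 1 ≤ M)
    (x : Fin M → Fin d → ℂ) (hx : ∀ m, ∑ i, ‖x m i‖ ^ 2 = 1)
    (t : ℝ) (n : ℕ) (hn : 1 ≤ n) :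
    ‖((List.ofFn fun m =>
          P0 ⊗ₖ (1 : Matrix (Fin d) (Fin d) ℂ) +
            P1 ⊗ₖ NormedSpace.exp
              ((-(Complex.I * ((t : ℂ) / ((n : ℂ) * (M : ℂ))))) • outerProj (x m))).reverse.prod) ^ n -
        NormedSpace.exp ((-(Complex.I * (t : ℂ))) •
          (P1 ⊗ₖ ((M : ℂ)⁻¹ • ∑ m, outerProj (x m))))‖ ≤
      (t ^ 2 / (n : ℝ)) * Real.exp |t| := by
  have hn0 : (0 : ℝ) < n := by exact_mod_cast hn
  have hM0 : (0 : ℝ) < M := by exact_mod_cast hM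
  have hnC : (n : ℂ) ≠ 0 := Nat.cast_ne_zero.mpr (by omega)
  have hMC : (M : ℂ) ≠ 0 := Nat.cast_ne_zero.mpr (by omega)
  set c : ℂ := -(Complex.I * ((t : ℂ) / ((n : ℂ) * (M : ℂ)))) with hc
  set A : Fin M → Matrix (Fin 2 × Fin d) (Fin 2 × Fin d) ℂ :=
    fun m => c • (P1 ⊗ₖ outerProj (x m)) with hA
  -- each unitary is an exponential
  have hU : ∀ m : Fin M, P0 ⊗ₖ (1 : Matrix (Fin d) (Fin d) ℂ) +
      P1 ⊗ₖ NormedSpace.exp (c • outerProj (x m)) = NormedSpace.exp (A m) := by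
    intro m
    simp only [hA]
    rw [← Matrix.kronecker_smul, exp_P1_kron]
  set l : List (Matrix (Fin 2 × Fin d) (Fin 2 × Fin d) ℂ) := (List.ofFn A).reverse with hl
  have hlist : (List.ofFn fun m => P0 ⊗ₖ (1 : Matrix (Fin d) (Fin d) ℂ) +
        P1 ⊗ₖ NormedSpace.exp (c • outerProj (x m))).reverse.prod
      = (l.map (NormedSpace.exp)).prod := by
    have h1 : (List.ofFn fun m => P0 ⊗ₖ (1 : Matrix (Fin d) (Fin d) ℂ) +
        P1 ⊗ₖ NormedSpace.exp (c • outerProj (x m)))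
        = List.map (NormedSpace.exp) (List.ofFn A) := by
      rw [List.map_ofFn]
      congr 1
      funext m
      simpa [Function.comp] using hU m
    rw [h1, hl, List.map_reverse]
  set S : Matrix (Fin 2 × Fin d) (Fin 2 × Fin d) ℂ := ∑ m, A m with hSdef
  have hlsum : l.sum = S := by
    rw [hl, List.sum_reverse, List.sum_ofFn]
  -- identify the target exponent
  have hkr : P1 ⊗ₖ (∑ m, outerProj (x m)) = ∑ m, P1 ⊗ₖ outerProj (x m) := by
    exact map_sum (kronP1L d) (fun m => outerProj (x m)) Finset.univ
  have hS : S = c • (P1 ⊗ₖ (∑ m, outerProj (x m))) := by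
    rw [hSdef, hA, hkr, Finset.smul_sum]
  have hT : (-(Complex.I * (t : ℂ))) • (P1 ⊗ₖ ((M : ℂ)⁻¹ • ∑ m, outerProj (x m))) = n • S := by
    rw [Matrix.kronecker_smul, smul_smul, hS, ← Nat.cast_smul_eq_nsmul ℂ, smul_smul]
    congr 1
    rw [hc]
    field_simp
  have hexpT : NormedSpace.exp ((-(Complex.I * (t : ℂ))) •
      (P1 ⊗ₖ ((M : ℂ)⁻¹ • ∑ m, outerProj (x m)))) = (NormedSpace.exp S) ^ n := by
    rw [hT, Matrix.exp_nsmul]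
  -- norm bounds
  have hRm : ∀ m : Fin M, ‖P1 ⊗ₖ outerProj (x m)‖ ≤ 1 := by
    intro m
    refine norm_le_one_of_proj ?_ ?_
    · rw [kron_conjTranspose, P1_conjTranspose, outerProj_conjTranspose]
    · rw [← Matrix.mul_kronecker_mul, P1_mul_P1, outerProj_mul_self _ (hx m)]
  have hcn : ‖c‖ = |t| / ((n : ℝ) * (M : ℝ)) := by
    rw [hc, norm_neg, norm_mul, Complex.norm_I, one_mul, norm_div, norm_mul,
      Complex.norm_real, Complex.norm_natCast, Complex.norm_natCast, Real.norm_eq_abs]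
  have hAm : ∀ m : Fin M, ‖A m‖ ≤ |t| / ((n : ℝ) * (M : ℝ)) := by
    intro m
    simp only [hA]
    rw [norm_smul, hcn]
    exact mul_le_of_le_one_right (by positivity) (hRm m)
  set s : ℝ := |t| / (n : ℝ) with hs
  have hs0 : 0 ≤ s := by positivity
  set σ : ℝ := (l.map (‖·‖)).sum with hσ
  have hσ0 : 0 ≤ σ := list_map_norm_sum_nonneg l
  have hσeq : σ = ∑ m, ‖A m‖ := by
    rw [hσ, hl, List.map_reverse, List.sum_reverse, List.map_ofFn, List.sum_ofFn]
    simp [Function.comp]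
  have hσs : σ ≤ s := by
    rw [hσeq]
    calc ∑ m, ‖A m‖ ≤ ∑ _m : Fin M, |t| / ((n : ℝ) * (M : ℝ)) :=
          Finset.sum_le_sum fun m _ => hAm m
      _ = (M : ℝ) * (|t| / ((n : ℝ) * (M : ℝ))) := by
          rw [Finset.sum_const, Finset.card_univ, Fintype.card_fin, nsmul_eq_mul]
      _ = s := by rw [hs]; field_simp
  have h1m : ‖(1 : Matrix (Fin 2 × Fin d) (Fin 2 × Fin d) ℂ)‖ ≤ 1 := norm_one_matrix_le
  have hSnorm : ‖S‖ ≤ s := by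
    rw [← hlsum]
    exact (list_norm_sum_le l).trans hσs
  have hP : ‖(l.map (NormedSpace.exp)).prod‖ ≤ Real.exp s :=
    (norm_list_prod_exp_le (𝕂 := ℂ) h1m l).trans (Real.exp_le_exp.mpr hσs)
  have hES : ‖NormedSpace.exp S‖ ≤ Real.exp s :=
    (norm_exp_le_exp_norm' (𝕂 := ℂ) h1m S).trans (Real.exp_le_exp.mpr hSnorm)
  have hdiff : ‖(l.map (NormedSpace.exp)).prod - NormedSpace.exp S‖
      ≤ 2 * (Real.exp s - 1 - s) := by
    have h3 : (l.map (NormedSpace.exp)).prod - NormedSpace.exp S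
        = ((l.map (NormedSpace.exp)).prod - 1 - l.sum)
          - (NormedSpace.exp S - 1 - S) := by rw [hlsum]; abel
    rw [h3]
    have b1 := norm_list_prod_exp_sub_le (𝕂 := ℂ) h1m l
    have b2 : ‖NormedSpace.exp S - 1 - S‖ ≤ Real.exp ‖S‖ - 1 - ‖S‖ :=
      norm_exp_sub_one_sub_le (𝕂 := ℂ) S
    have m1 : Real.exp σ - 1 - σ ≤ Real.exp s - 1 - s := exp_sub_one_sub_mono hσ0 hσs
    have m2 : Real.exp ‖S‖ - 1 - ‖S‖ ≤ Real.exp s - 1 - s :=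
      exp_sub_one_sub_mono (norm_nonneg S) hSnorm
    refine (norm_sub_le _ _).trans ?_
    linarith
  -- assemble
  have hEexp : (Real.exp s) ^ n = Real.exp |t| := by
    rw [← Real.exp_nat_mul]
    congr 1
    rw [hs]
    field_simp
  have hs2 : s ^ 2 = t ^ 2 / (n : ℝ) ^ 2 := by
    rw [hs, div_pow, sq_abs]
  obtain ⟨k, rfl⟩ : ∃ k, n = k + 1 := ⟨n - 1, by omega⟩
  have hpow := norm_pow_sub_pow_le (l.map (NormedSpace.exp)).prod (NormedSpace.exp S)
    hP hES k
  calc ‖((List.ofFn fun m => P0 ⊗ₖ (1 : Matrix (Fin d) (Fin d) ℂ) +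
        P1 ⊗ₖ NormedSpace.exp (c • outerProj (x m))).reverse.prod) ^ (k + 1) -
        NormedSpace.exp ((-(Complex.I * (t : ℂ))) •
          (P1 ⊗ₖ ((M : ℂ)⁻¹ • ∑ m, outerProj (x m))))‖
      = ‖((l.map (NormedSpace.exp)).prod) ^ (k + 1) - (NormedSpace.exp S) ^ (k + 1)‖ := by
        rw [hlist, hexpT]
    _ ≤ ((k : ℝ) + 1) * (Real.exp s) ^ k *
          ‖(l.map (NormedSpace.exp)).prod - NormedSpace.exp S‖ := hpow
    _ ≤ ((k : ℝ) + 1) * (Real.exp s) ^ k * (2 * (Real.exp s - 1 - s)) := by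
        refine mul_le_mul_of_nonneg_left hdiff (by positivity)
    _ ≤ ((k : ℝ) + 1) * (Real.exp s) ^ k * (s ^ 2 * Real.exp s) := by
        refine mul_le_mul_of_nonneg_left (two_exp_sub_le hs0) (by positivity)
    _ = ((k : ℝ) + 1) * s ^ 2 * ((Real.exp s) ^ k * Real.exp s) := by ring
    _ = ((k : ℝ) + 1) * (t ^ 2 / ((k : ℝ) + 1) ^ 2) * Real.exp |t| := by
        rw [← pow_succ, hs2]
        push_cast [hEexp]
        ring
    _ = t ^ 2 / ((k + 1 : ℕ) : ℝ) * Real.exp |t| := by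
        push_cast
        have hk1 : ((k : ℝ) + 1) ≠ 0 := by positivity
        field_simp
end
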